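/- In any binomial ring R, for all a ∈ R and natural numbers m, n: (a choose m)(a choose n) = Σ_{k=0}^{n} (a choose m+k)·(m+k choose n)·(n choose k), where (m+k choose n) and (n choose k) are ordinary integer binomial coefficients. -/

import Mathlib

open Finset

lemma nat_choose_aux (m n k : ℕ) (hk : k ≤ n) :
    (m + k).choose m * m.choose (n - k) = (m + k).choose n * n.choose k := by
  rcases le_or_gt n (m + k) with h | h
  · rw [Nat.choose_mul (n := m + k) hk, Nat.add_sub_cancel, Nat.choose_symm_add]
  · have h1 : m < n - k := by omega
    rw [Nat.choose_eq_zero_of_lt h1, Nat.choose_eq_zero_of_lt h, mul_zero, zero_mul]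

/-- In a binomial ring, `(a choose m)(a choose n) =
Σ_{k=0}^{n} (a choose m+k)·(m+k choose n)·(n choose k)`. -/
theorem binomialRing_choose_mul_choose {R : Type*} [CommRing R] [BinomialRing R]
    (a : R) (m n : ℕ) :
    Ring.choose a m * Ring.choose a n =
      ∑ k ∈ Finset.range (n + 1),
        Ring.choose a (m + k) * ((m + k).choose n : R) * (n.choose k : R) := by
  have hvand : Ring.choose a n =
      ∑ k ∈ Finset.range (n + 1), Ring.choose (a - m) k * (m.choose (n - k) : R) := by
    have h := Ring.add_choose_eq (r := a - (m : R)) (s := (m : R)) n (Commute.all _ _)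
    rw [sub_add_cancel] at h
    rw [h, Finset.Nat.sum_antidiagonal_eq_sum_range_succ_mk]
    exact Finset.sum_congr rfl fun k _ => by rw [Ring.choose_natCast]
  rw [hvand, Finset.mul_sum]
  refine Finset.sum_congr rfl fun k hk => ?_
  have hkn : k ≤ n := Nat.lt_succ_iff.mp (Finset.mem_range.mp hk)
  have hsmul := Ring.choose_smul_choose a (Nat.le_add_right m k)
  rw [Nat.add_sub_cancel_left] at hsmul
  rw [← mul_assoc, ← hsmul, nsmul_eq_mul, mul_assoc, mul_left_comm, ← Nat.cast_mul,
    nat_choose_aux m n k hkn, Nat.cast_mul]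
  ring
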